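/- Let (f,g) ∈ 𝒜 and let K be the unique minimal set of ⟨f,g⟩₊. Then K is a compact perfect set: K is closed in I and has no isolated points. -/
import Mathlib


open Set Function MeasureTheory

noncomputable section

namespace IFSPaper

/-- The closed unit interval `I = [0,1]` as a subset of `ℝ`. -/
def unitI : Set ℝ := Set.Icc 0 1

/-- Membership in the class `𝒜`: `f, g : I → I` are `C¹` diffeomorphisms onto their
images with `f 0 = 0`, `g 1 = 1`, `f x < x < g x` on `(0,1)` and `0 < g 0 < f 1 < 1`. -/
structure MemA (f g : ℝ → ℝ) : Prop where
  f_maps : Set.MapsTo f unitI unitI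
  g_maps : Set.MapsTo g unitI unitI
  f_c1 : ContDiff ℝ 1 f
  g_c1 : ContDiff ℝ 1 g
  f_inj : Set.InjOn f unitI
  g_inj : Set.InjOn g unitI
  f_deriv_ne : ∀ x ∈ unitI, deriv f x ≠ 0
  g_deriv_ne : ∀ x ∈ unitI, deriv g x ≠ 0
  f_zero : f 0 = 0
  g_one : g 1 = 1
  f_lt_id : ∀ x ∈ Set.Ioo (0:ℝ) 1, f x < x
  id_lt_g : ∀ x ∈ Set.Ioo (0:ℝ) 1, x < g x
  g0_pos : 0 < g 0
  g0_lt_f1 : g 0 < f 1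
  f1_lt_one : f 1 < 1

/-- The element of the semigroup `⟨f,g⟩₊` associated to a word in the two generators
(`true ↦ f`, `false ↦ g`). -/
def word (f g : ℝ → ℝ) : List Bool → ℝ → ℝ
  | [] => id
  | b :: t => (if b then f else g) ∘ word f g t

/-- The semigroup orbit `O₊(x) = {φ x : φ ∈ ⟨f,g⟩₊}` of a point `x`. -/
def orbitP (f g : ℝ → ℝ) (x : ℝ) : Set ℝ :=
  {y | ∃ w : List Bool, w ≠ [] ∧ word f g w x = y}

/-- `K` is a minimal set for the action of `⟨f,g⟩₊` on `I`. -/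
def IsMinimalSet (f g : ℝ → ℝ) (K : Set ℝ) : Prop :=
  K.Nonempty ∧ K ⊆ unitI ∧ ∀ x ∈ K, closure (orbitP f g x) = K

/-- The overlapping region `W = [g 0, f 1]`. -/
def ovW (f g : ℝ → ℝ) : Set ℝ := Set.Icc (g 0) (f 1)

/-- The fundamental domain `Fₙ = [f^[n+1] 1, f^[n] 1]`. -/
def Fint (f : ℝ → ℝ) (n : ℕ) : Set ℝ := Set.Icc (f^[n+1] 1) (f^[n] 1)

/-- The fundamental domain `Gₙ = [g^[n] 0, g^[n+1] 0]`. -/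
def Gint (g : ℝ → ℝ) (n : ℕ) : Set ℝ := Set.Icc (g^[n] 0) (g^[n+1] 0)

/-- Single overlapping property `So`: `f² 1 < g 0` and `f 1 < g² 0`. -/
def So (f g : ℝ → ℝ) : Prop := f (f 1) < g 0 ∧ f 1 < g (g 0)

/-- A (nonempty) closed bounded interval. -/
def IsClosedInterval (A : Set ℝ) : Prop := ∃ a b : ℝ, a ≤ b ∧ A = Set.Icc a b

/-- A closed bounded interval with nonempty interior. -/
def IsNondegClosedInterval (A : Set ℝ) : Prop := ∃ a b : ℝ, a < b ∧ A = Set.Icc a b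

/-- A nonempty open bounded interval. -/
def IsOpenInterval (J : Set ℝ) : Prop := ∃ a b : ℝ, a < b ∧ J = Set.Ioo a b

/-- Hole property `Ho` witnessed by the pair of holes `(Hf, Hg)`. -/
def HoleAt (f g : ℝ → ℝ) (Hf Hg : Set ℝ) : Prop :=
  IsNondegClosedInterval Hf ∧ IsNondegClosedInterval Hg ∧
  Hf ⊆ interior (Fint f 1 \ ovW f g) ∧
  Hg ⊆ interior (Gint g 1 \ ovW f g) ∧
  g '' Hf = Hg ∧ f '' Hg = Hf

/-- Hole property `Ho`. -/
def Ho (f g : ℝ → ℝ) : Prop := ∃ Hf Hg : Set ℝ, HoleAt f g Hf Hg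

/-- The induced (first-return) map `𝓕 : F₁ \ {f 1} → G₁`,
`𝓕 x = g^[-n x] (f⁻¹ x)` where `n x` is least with `g^[-n x] (f⁻¹ x) ∈ G₁`. -/
def calF (f g : ℝ → ℝ) (x : ℝ) : ℝ :=
  (Function.invFunOn g unitI)^[sInf {n : ℕ |
      (Function.invFunOn g unitI)^[n] (Function.invFunOn f unitI x) ∈ Gint g 1}]
    (Function.invFunOn f unitI x)

/-- The induced (first-return) map `𝓖 : G₁ \ {g 0} → F₁`. -/
def calG (f g : ℝ → ℝ) (x : ℝ) : ℝ :=
  (Function.invFunOn f unitI)^[sInf {n : ℕ |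
      (Function.invFunOn f unitI)^[n] (Function.invFunOn g unitI x) ∈ Fint f 1}]
    (Function.invFunOn g unitI x)

/-- Eventual expansion property `Ee`: `𝓕` is uniformly expanding outside `Hf`
and `𝓖` outside `Hg` (at all points where the derivative makes sense). -/
def Ee (f g : ℝ → ℝ) (Hf Hg : Set ℝ) : Prop :=
  ∃ μ : ℝ, 1 < μ ∧
    (∀ y ∈ Fint f 1 \ Hf, DifferentiableAt ℝ (calF f g) y → μ < deriv (calF f g) y) ∧
    (∀ y ∈ Gint g 1 \ Hg, DifferentiableAt ℝ (calG f g) y → μ < deriv (calG f g) y)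

/-- The ruination region `R_f = 𝓕⁻¹(Hg) ⊆ F₁`. -/
def Rf (f g : ℝ → ℝ) (Hg : Set ℝ) : Set ℝ :=
  {x | x ∈ Fint f 1 \ {f 1} ∧ calF f g x ∈ Hg}

/-- The ruination region `R_g = 𝓖⁻¹(Hf) ⊆ G₁`. -/
def Rg (f g : ℝ → ℝ) (Hf : Set ℝ) : Set ℝ :=
  {x | x ∈ Gint g 1 \ {g 0} ∧ calG f g x ∈ Hf}

/-- Castration property `Ca`: `W ⊆ int R_f ∪ int R_g`. -/
def Ca (f g : ℝ → ℝ) (Hf Hg : Set ℝ) : Prop :=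
  ovW f g ⊆ interior (Rf f g Hg) ∪ interior (Rg f g Hf)

/-- Membership in the class `𝒞` with the given holes `(Hf, Hg)`:
`(f,g) ∈ 𝒜` together with `So`, `Ho`, `Ee` and `Ca`. -/
def MemC (f g : ℝ → ℝ) (Hf Hg : Set ℝ) : Prop :=
  MemA f g ∧ So f g ∧ HoleAt f g Hf Hg ∧ Ee f g Hf Hg ∧ Ca f g Hf Hg

/-- The interval `I₋₁ = [0, 1/3 - ε]` of the appendix example. -/
def Im1 (ε : ℝ) : Set ℝ := Set.Icc 0 (1/3 - ε)

/-- The interval `I₀ = [1/3 + ε, 2/3 - ε]` of the appendix example. -/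
def Iz (ε : ℝ) : Set ℝ := Set.Icc (1/3 + ε) (2/3 - ε)

/-- The interval `I₁ = [2/3 + ε, 1]` of the appendix example. -/
def Ip1 (ε : ℝ) : Set ℝ := Set.Icc (2/3 + ε) 1

/-- The inclusion property of the appendix example. -/
def InclusionProp (f g : ℝ → ℝ) (ε : ℝ) : Prop :=
  f '' Im1 ε ⊆ Im1 ε ∧ f '' Iz ε ⊆ interior (Im1 ε) ∧ f '' Ip1 ε ⊆ interior (Iz ε) ∧
  g '' Ip1 ε ⊆ Ip1 ε ∧ g '' Iz ε ⊆ interior (Ip1 ε) ∧ g '' Im1 ε ⊆ interior (Iz ε)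

/-- The strong uniform contraction property of the appendix example. -/
def StrongContraction (f g : ℝ → ℝ) (ε lam : ℝ) : Prop :=
  ∀ x ∈ Im1 ε ∪ Iz ε ∪ Ip1 ε, deriv f x < lam ∧ deriv g x < lam


section AuxLemmas

variable {f g : ℝ → ℝ} {K : Set ℝ}

lemma zero_mem_unitI : (0:ℝ) ∈ unitI := by constructor <;> norm_num

lemma one_mem_unitI : (1:ℝ) ∈ unitI := by constructor <;> norm_num

lemma MemA.f1_pos (hA : MemA f g) : 0 < f 1 := hA.g0_pos.trans hA.g0_lt_f1

lemma MemA.g0_lt_one (hA : MemA f g) : g 0 < 1 := hA.g0_lt_f1.trans hA.f1_lt_one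

lemma MemA.f_mono (hA : MemA f g) : StrictMonoOn f unitI :=
  ContinuousOn.strictMonoOn_of_injOn_Icc (f := f) (a := (0:ℝ)) (b := 1)
    zero_le_one (by rw [hA.f_zero]; exact hA.f1_pos.le)
    hA.f_c1.continuous.continuousOn hA.f_inj

lemma MemA.g_mono (hA : MemA f g) : StrictMonoOn g unitI :=
  ContinuousOn.strictMonoOn_of_injOn_Icc (f := g) (a := (0:ℝ)) (b := 1)
    zero_le_one (by rw [hA.g_one]; exact hA.g0_lt_one.le)
    hA.g_c1.continuous.continuousOn hA.g_inj

lemma MemA.f_le (hA : MemA f g) : ∀ x ∈ unitI, f x ≤ x := by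
  intro x hx
  rcases eq_or_lt_of_le hx.1 with h0 | h0
  · rw [← h0, hA.f_zero]
  rcases eq_or_lt_of_le hx.2 with h1 | h1
  · rw [h1]; exact hA.f1_lt_one.le
  · exact (hA.f_lt_id x ⟨h0, h1⟩).le

lemma MemA.g_ge (hA : MemA f g) : ∀ x ∈ unitI, x ≤ g x := by
  intro x hx
  rcases eq_or_lt_of_le hx.2 with h1 | h1
  · rw [h1, hA.g_one]
  rcases eq_or_lt_of_le hx.1 with h0 | h0
  · rw [← h0]; exact hA.g0_pos.le
  · exact (hA.id_lt_g x ⟨h0, h1⟩).le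

lemma word_append' (f g : ℝ → ℝ) (a b : List Bool) :
    word f g (a ++ b) = word f g a ∘ word f g b := by
  induction a with
  | nil => rfl
  | cons h t ih =>
    show (if h then f else g) ∘ word f g (t ++ b)
        = ((if h then f else g) ∘ word f g t) ∘ word f g b
    rw [ih, Function.comp_assoc]

lemma word_replicate_true (f g : ℝ → ℝ) (n : ℕ) :
    word f g (List.replicate n true) = f^[n] := by
  induction n with
  | zero => rfl
  | succ n ih =>
    rw [List.replicate_succ]
    show (if true then f else g) ∘ word f g (List.replicate n true) = f^[n+1]
    rw [if_pos rfl, ih, Function.iterate_succ']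

lemma word_replicate_false (f g : ℝ → ℝ) (n : ℕ) :
    word f g (List.replicate n false) = g^[n] := by
  induction n with
  | zero => rfl
  | succ n ih =>
    rw [List.replicate_succ]
    show (if false then f else g) ∘ word f g (List.replicate n false) = g^[n+1]
    rw [if_neg (by simp), ih, Function.iterate_succ']

lemma word_mapsTo (hA : MemA f g) (w : List Bool) :
    Set.MapsTo (word f g w) unitI unitI := by
  induction w with
  | nil => exact Set.mapsTo_id _
  | cons b t ih =>
    cases b
    · exact Set.MapsTo.comp (by simpa using hA.g_maps) ih
    · exact Set.MapsTo.comp (by simpa using hA.f_maps) ih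

lemma word_mono (hA : MemA f g) (w : List Bool) :
    StrictMonoOn (word f g w) unitI := by
  induction w with
  | nil => exact fun x _ y _ h => h
  | cons b t ih =>
    cases b
    · exact StrictMonoOn.comp (by simpa using hA.g_mono) ih (word_mapsTo hA t)
    · exact StrictMonoOn.comp (by simpa using hA.f_mono) ih (word_mapsTo hA t)

lemma word_continuous (hA : MemA f g) (w : List Bool) :
    Continuous (word f g w) := by
  induction w with
  | nil => exact continuous_id
  | cons b t ih =>
    cases b
    · exact Continuous.comp (by simpa using hA.g_c1.continuous) ih
    · exact Continuous.comp (by simpa using hA.f_c1.continuous) ih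

lemma orbit_subset_K (hK : IsMinimalSet f g K) {x : ℝ} (hx : x ∈ K) :
    orbitP f g x ⊆ K := by
  rw [← hK.2.2 x hx]; exact subset_closure

lemma f_iter_mem_orbit (f g : ℝ → ℝ) (y : ℝ) (n : ℕ) :
    f^[n+1] y ∈ orbitP f g y :=
  ⟨List.replicate (n+1) true, by simp, by rw [word_replicate_true]⟩

lemma g_iter_mem_orbit (f g : ℝ → ℝ) (y : ℝ) (n : ℕ) :
    g^[n+1] y ∈ orbitP f g y :=
  ⟨List.replicate (n+1) false, by simp, by rw [word_replicate_false]⟩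

lemma f_iter_tendsto (hA : MemA f g) {y : ℝ} (hy : y ∈ unitI) :
    Filter.Tendsto (fun n => f^[n+1] y) Filter.atTop (nhds 0) := by
  set a : ℕ → ℝ := fun n => f^[n+1] y with ha
  have haI : ∀ n, a n ∈ unitI := fun n => (hA.f_maps.iterate (n+1)) hy
  have hstep : ∀ n, a (n+1) = f (a n) := fun n => by
    simp only [ha, Function.iterate_succ_apply']
  have hanti : Antitone a := antitone_nat_of_succ_le fun n => by
    rw [hstep n]; exact hA.f_le _ (haI n)
  have hbdd : BddBelow (Set.range a) :=
    ⟨0, by rintro z ⟨n, rfl⟩; exact (haI n).1⟩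
  have hlim : Filter.Tendsto a Filter.atTop (nhds (⨅ n, a n)) :=
    tendsto_atTop_ciInf hanti hbdd
  set L := ⨅ n, a n with hL
  have hLI : L ∈ unitI :=
    isClosed_Icc.mem_of_tendsto hlim (Filter.Eventually.of_forall haI)
  have hfL : f L = L := by
    have h1 : Filter.Tendsto (fun n => a (n+1)) Filter.atTop (nhds L) :=
      hlim.comp (Filter.tendsto_add_atTop_nat 1)
    have h2 : Filter.Tendsto (fun n => f (a n)) Filter.atTop (nhds (f L)) :=
      (hA.f_c1.continuous.tendsto L).comp hlim
    have heq : (fun n => a (n+1)) = fun n => f (a n) := funext hstep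
    rw [heq] at h1
    exact tendsto_nhds_unique h2 h1
  have hLlt1 : L < 1 := by
    have h1 : L ≤ a 0 := ciInf_le hbdd 0
    have h2 : a 0 = f y := by simp [ha]
    have h3 : f y ≤ f 1 := by
      rcases eq_or_lt_of_le hy.2 with h | h
      · rw [h]
      · exact (hA.f_mono hy one_mem_unitI h).le
    exact lt_of_le_of_lt (h1.trans (h2 ▸ h3)) hA.f1_lt_one
  have hL0 : L = 0 := by
    by_contra hne
    have hpos : 0 < L := lt_of_le_of_ne hLI.1 (Ne.symm hne)
    exact absurd hfL (ne_of_lt (hA.f_lt_id L ⟨hpos, hLlt1⟩))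
  rw [← hL0]; exact hlim

lemma g_iter_tendsto (hA : MemA f g) {y : ℝ} (hy : y ∈ unitI) :
    Filter.Tendsto (fun n => g^[n+1] y) Filter.atTop (nhds 1) := by
  set a : ℕ → ℝ := fun n => g^[n+1] y with ha
  have haI : ∀ n, a n ∈ unitI := fun n => (hA.g_maps.iterate (n+1)) hy
  have hstep : ∀ n, a (n+1) = g (a n) := fun n => by
    simp only [ha, Function.iterate_succ_apply']
  have hmono : Monotone a := monotone_nat_of_le_succ fun n => by
    rw [hstep n]; exact hA.g_ge _ (haI n)
  have hbdd : BddAbove (Set.range a) :=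
    ⟨1, by rintro z ⟨n, rfl⟩; exact (haI n).2⟩
  have hlim : Filter.Tendsto a Filter.atTop (nhds (⨆ n, a n)) :=
    tendsto_atTop_ciSup hmono hbdd
  set L := ⨆ n, a n with hL
  have hLI : L ∈ unitI :=
    isClosed_Icc.mem_of_tendsto hlim (Filter.Eventually.of_forall haI)
  have hgL : g L = L := by
    have h1 : Filter.Tendsto (fun n => a (n+1)) Filter.atTop (nhds L) :=
      hlim.comp (Filter.tendsto_add_atTop_nat 1)
    have h2 : Filter.Tendsto (fun n => g (a n)) Filter.atTop (nhds (g L)) :=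
      (hA.g_c1.continuous.tendsto L).comp hlim
    have heq : (fun n => a (n+1)) = fun n => g (a n) := funext hstep
    rw [heq] at h1
    exact tendsto_nhds_unique h2 h1
  have hLpos : 0 < L := by
    have h1 : a 0 ≤ L := le_ciSup hbdd 0
    have h2 : a 0 = g y := by simp [ha]
    have h3 : g 0 ≤ g y := by
      rcases eq_or_lt_of_le hy.1 with h | h
      · rw [← h]
      · exact (hA.g_mono zero_mem_unitI hy h).le
    exact lt_of_lt_of_le (lt_of_lt_of_le hA.g0_pos (h3.trans (h2 ▸ h1))) le_rfl
  have hL1 : L = 1 := by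
    by_contra hne
    have hlt : L < 1 := lt_of_le_of_ne hLI.2 hne
    exact absurd hgL (ne_of_gt (hA.id_lt_g L ⟨hLpos, hlt⟩))
  rw [← hL1]; exact hlim

lemma zero_mem_K (hA : MemA f g) (hK : IsMinimalSet f g K) : (0:ℝ) ∈ K := by
  obtain ⟨y, hy⟩ := hK.1
  have hyI : y ∈ unitI := hK.2.1 hy
  rw [← hK.2.2 y hy]
  exact mem_closure_of_tendsto (f_iter_tendsto hA hyI)
    (Filter.Eventually.of_forall fun n => f_iter_mem_orbit f g y n)

lemma one_mem_K (hA : MemA f g) (hK : IsMinimalSet f g K) : (1:ℝ) ∈ K := by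
  obtain ⟨y, hy⟩ := hK.1
  have hyI : y ∈ unitI := hK.2.1 hy
  rw [← hK.2.2 y hy]
  exact mem_closure_of_tendsto (g_iter_tendsto hA hyI)
    (Filter.Eventually.of_forall fun n => g_iter_mem_orbit f g y n)

lemma g_iter_lt_one (hA : MemA f g) (n : ℕ) : g^[n] (0:ℝ) < 1 := by
  induction n with
  | zero => norm_num
  | succ n ih =>
    rw [Function.iterate_succ_apply']
    have hmem : g^[n] (0:ℝ) ∈ unitI := (hA.g_maps.iterate n) zero_mem_unitI
    calc g (g^[n] (0:ℝ)) < g 1 := hA.g_mono hmem one_mem_unitI ih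
      _ = 1 := hA.g_one

end AuxLemmas

/-- for `(f,g) ∈ 𝒜`, the minimal set `K` is a compact perfect set:
it is closed (in `I`, equivalently in `ℝ`) and has no isolated points. -/
theorem minimal_set_compact_perfect (f g : ℝ → ℝ) (K : Set ℝ)
    (hA : MemA f g) (hK : IsMinimalSet f g K) :
    IsCompact K ∧ Perfect K := by
  obtain ⟨hne, hKI, hmin⟩ := hK
  obtain ⟨x₀, hx₀⟩ := hne
  have hK' : IsMinimalSet f g K := ⟨⟨x₀, hx₀⟩, hKI, hmin⟩
  have hclosed : IsClosed K := by
    rw [← hmin x₀ hx₀]; exact isClosed_closure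
  have hcompact : IsCompact K :=
    IsCompact.of_isClosed_subset isCompact_Icc hclosed hKI
  refine ⟨hcompact, hclosed, ?_⟩
  intro x hx
  rw [accPt_iff_nhds]
  intro U hU
  by_contra hcon
  push_neg at hcon
  have hcon' : ∀ y ∈ U, y ∈ K → y = x := by
    intro y hyU hyK
    rcases eq_or_ne y x with h | h
    · exact h
    · exact absurd h (by simpa using hcon y ⟨hyU, hyK⟩)
  -- x is in the closure of the orbit of 1, hence (being isolated) in the orbit of 1
  have h1K : (1:ℝ) ∈ K := one_mem_K hA hK'
  have hxcl : x ∈ closure (orbitP f g 1) := by rw [hmin 1 h1K]; exact hx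
  obtain ⟨z, hzU, hzO⟩ := mem_closure_iff_nhds.mp hxcl U hU
  have hzK : z ∈ K := orbit_subset_K hK' h1K hzO
  have hzx : z = x := hcon' z hzU hzK
  obtain ⟨w, hw, hwx⟩ := hzO
  rw [hzx] at hwx
  -- approximate 1 from below by g-iterates of 0 and push forward with the word w
  have h0K : (0:ℝ) ∈ K := zero_mem_K hA hK'
  set φ := word f g w with hφ
  have htend : Filter.Tendsto (fun n => φ (g^[n+1] 0)) Filter.atTop (nhds x) := by
    have h := ((word_continuous hA w).tendsto 1).comp (g_iter_tendsto hA zero_mem_unitI)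
    rw [← hφ, hwx] at h
    exact h
  have hmemK : ∀ n, φ (g^[n+1] 0) ∈ K := by
    intro n
    have : φ (g^[n+1] 0) ∈ orbitP f g 0 := by
      refine ⟨w ++ List.replicate (n+1) false, by simp [hw], ?_⟩
      rw [word_append', Function.comp_apply, word_replicate_false]
    exact orbit_subset_K hK' h0K this
  have hlt : ∀ n, φ (g^[n+1] 0) < x := by
    intro n
    have hmem : g^[n+1] (0:ℝ) ∈ unitI := (hA.g_maps.iterate (n+1)) zero_mem_unitI
    calc φ (g^[n+1] 0) < φ 1 :=
          word_mono hA w hmem one_mem_unitI (g_iter_lt_one hA (n+1))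
      _ = x := hwx
  have hev : ∀ᶠ n in Filter.atTop, φ (g^[n+1] 0) ∈ U := htend.eventually_mem hU
  obtain ⟨n, hn⟩ := hev.exists
  exact absurd (hcon' _ hn (hmemK n)) (ne_of_lt (hlt n))


end IFSPaper
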